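/- Let 1 < α < 2 and let L_n denote the degree-n Legendre polynomial. Then for every integer n ≥ 0 and every x ∈ (−1,1): (d/dx)(I_l^{2−α} L_n)(x) = r_{nα} (1+x)^{1−α} P_n^{α−1, 1−α}(x) and −(d/dx)(I_r^{2−α} L_n)(x) = r_{nα} (1−x)^{1−α} P_n^{1−α, α−1}(x), where r_{nα} = Γ(n+1)/Γ(n+2−α); i.e., the left and right Riemann–Liouville derivatives of order α−1 of L_n are weighted Jacobi polynomials. -/

import Mathlib

open MeasureTheory Real Set Finset

noncomputable section

/-- The interval Λ = (−1, 1). -/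
def Lam : Set ℝ := Set.Ioo (-1 : ℝ) 1

/-- Left Riemann–Liouville fractional integral of order `σ` on `(−1,1)`;
`Il 0` is the identity. -/
def Il (σ : ℝ) (v : ℝ → ℝ) (x : ℝ) : ℝ :=
  if σ = 0 then v x
  else (1 / Real.Gamma σ) * ∫ y in (-1 : ℝ)..x, (x - y) ^ (σ - 1) * v y

/-- Right Riemann–Liouville fractional integral of order `σ` on `(−1,1)`;
`Ir 0` is the identity. -/
def Ir (σ : ℝ) (v : ℝ → ℝ) (x : ℝ) : ℝ :=
  if σ = 0 then v x
  else (1 / Real.Gamma σ) * ∫ y in x..(1 : ℝ), (y - x) ^ (σ - 1) * v y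

/-- The constant `C_{α,p} = (sin(πμ) + sin(πν)) / sin(πα)`. -/
def Cap (α μ ν : ℝ) : ℝ := (Real.sin (π * μ) + Real.sin (π * ν)) / Real.sin (π * α)

/-- Two-sided fractional integral `I_p^σ v = C_{α,p}(p I_l^σ v + (1−p) I_r^σ v)`. -/
def Ip (α μ ν p σ : ℝ) (v : ℝ → ℝ) (x : ℝ) : ℝ :=
  Cap α μ ν * (p * Il σ v x + (1 - p) * Ir σ v x)

/-- Two-sided Riemann–Liouville fractional derivative of order `α − 1`. -/
def Dp (α μ ν p : ℝ) (v : ℝ → ℝ) : ℝ → ℝ := deriv (Ip α μ ν p (2 - α) v)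

/-- Jacobi polynomial `P_n^{a,b}` given by its explicit hypergeometric sum. -/
def jacobiP (n : ℕ) (a b : ℝ) (x : ℝ) : ℝ :=
  ∑ m ∈ Finset.range (n + 1),
    (Real.Gamma (a + n + 1) * Real.Gamma (a + b + n + m + 1)) /
      ((m.factorial : ℝ) * ((n - m).factorial : ℝ) * Real.Gamma (a + b + n + 1) *
        Real.Gamma (a + m + 1)) * ((x - 1) / 2) ^ m

/-- Jacobi poly-fractonomial `J_n^{−a,−b}(x) = (1−x)^a (1+x)^b P_n^{a,b}(x)`. -/
def Jpf (n : ℕ) (a b : ℝ) (x : ℝ) : ℝ :=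
  (1 - x) ^ a * (1 + x) ^ b * jacobiP n a b x

/-- Membership in the fractional derivative space `H_RL^{α−1}(Λ)`. -/
def MemH (α μ ν p : ℝ) (v : ℝ → ℝ) : Prop :=
  IntegrableOn (fun x => (Ip α μ ν p (2 - α) v x) ^ 2) Lam ∧
    IntegrableOn (fun x => (Dp α μ ν p v x) ^ 2) Lam

/-- Squared norm of `H_RL^{α−1}(Λ)`. -/
def HnormSq (α μ ν p : ℝ) (v : ℝ → ℝ) : ℝ :=
  (∫ x in Lam, (Ip α μ ν p (2 - α) v x) ^ 2) + ∫ x in Lam, (Dp α μ ν p v x) ^ 2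

/-- The bilinear form `A(u,v) = c(u, I_p^{2−α}v) + (D_p^{α−1}u, D_p^{α−1}v)`. -/
def Aform (α μ ν p c : ℝ) (u v : ℝ → ℝ) : ℝ :=
  c * (∫ x in Lam, u x * Ip α μ ν p (2 - α) v x) +
    ∫ x in Lam, Dp α μ ν p u x * Dp α μ ν p v x

/-- Incomplete Fourier transform `F^c(w)(ξ) = (1/2π) ∫_{−1}^1 w(x) e^{iξx} dx`. -/
def Fc (w : ℝ → ℝ) (ξ : ℝ) : ℂ :=
  ((1 / (2 * π) : ℝ) : ℂ) *
    ∫ x in (-1 : ℝ)..1, (w x : ℂ) * Complex.exp (Complex.I * ξ * x)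


def poch (c : ℝ) (i : ℕ) : ℝ := ∏ k ∈ Finset.range i, (c + k)

@[simp] lemma poch_zero (c : ℝ) : poch c 0 = 1 := by simp [poch]

lemma poch_succ (c : ℝ) (i : ℕ) : poch c (i+1) = poch c i * (c + i) := by
  simp [poch, Finset.prod_range_succ]

lemma poch_succ_left (c : ℝ) (i : ℕ) : poch c (i+1) = c * poch (c+1) i := by
  rw [poch, Finset.prod_range_succ']
  simp only [Nat.cast_zero, add_zero, poch]
  rw [mul_comm]
  congr 1
  apply Finset.prod_congr rfl
  intro k _
  push_cast
  ring

lemma poch_add (c : ℝ) (i j : ℕ) : poch c (i+j) = poch c i * poch (c+i) j := by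
  rw [poch, Finset.prod_range_add]
  congr 1
  apply Finset.prod_congr rfl
  intro k _
  push_cast; ring

lemma poch_pos {c : ℝ} (hc : 0 < c) (i : ℕ) : 0 < poch c i := by
  apply Finset.prod_pos
  intro k _
  positivity

lemma Gamma_poch {c : ℝ} (hc : 0 < c) (i : ℕ) :
    Real.Gamma (c + i) = Real.Gamma c * poch c i := by
  induction i with
  | zero => simp
  | succ i ih =>
    have h1 : c + (i+1 : ℕ) = (c + i) + 1 := by push_cast; ring
    rw [h1, Real.Gamma_add_one (by positivity), ih, poch_succ]; ring

lemma poch_reflect (c : ℝ) (M : ℕ) : poch c M = (-1)^M * poch (-c - M + 1) M := by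
  rw [poch, poch, ← Finset.prod_range_reflect (fun k => c + (k:ℝ)) M,
     show ((-1:ℝ))^M = ∏ k ∈ Finset.range M, (-1:ℝ) by simp, ← Finset.prod_mul_distrib]
  apply Finset.prod_congr rfl
  intro k hk
  have hkM := Finset.mem_range.mp hk
  have h1 : (M - 1 - k : ℕ) = M - (k+1) := by omega
  have h2 : ((M - (k+1) : ℕ) : ℝ) = (M:ℝ) - (k+1) := by
    have : k + 1 ≤ M := hkM
    push_cast [Nat.cast_sub this]
    ring
  simp only [h1, h2]
  ring

-- Chu-Vandermonde
lemma vandermonde (N : ℕ) : ∀ a b : ℝ,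
    ∑ i ∈ Finset.range (N+1), (-1:ℝ)^i * (N.choose i) * poch a i * poch (b+i) (N-i)
      = poch (b-a) N := by
  induction N with
  | zero => intro a b; simp
  | succ N ih =>
    intro a b
    rw [Finset.sum_range_succ']
    have hsplit : ∀ i ∈ Finset.range (N+1),
        (-1:ℝ)^(i+1) * (((N+1).choose (i+1) : ℕ)) * poch a (i+1) * poch (b+((i+1:ℕ):ℝ)) (N+1-(i+1))
        = ((-1:ℝ)^(i+1) * ((N.choose i : ℕ)) * poch a (i+1) * poch (b+(i:ℝ)+1) (N-i)
          + (-1:ℝ)^(i+1) * ((N.choose (i+1) : ℕ)) * poch a (i+1) * poch (b+(i:ℝ)+1) (N-i)) := by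
      intro i _
      rw [Nat.succ_sub_succ, Nat.choose_succ_succ]
      simp only [Nat.succ_eq_add_one]
      push_cast
      ring
    rw [Finset.sum_congr rfl hsplit, Finset.sum_add_distrib]
    have hA : (∑ i ∈ Finset.range (N+1),
          (-1:ℝ)^(i+1) * ((N.choose (i+1) : ℕ)) * poch a (i+1) * poch (b+(i:ℝ)+1) (N-i))
          + ((-1:ℝ)^0 * (((N+1).choose 0 : ℕ)) * poch a 0 * poch (b+((0:ℕ):ℝ)) (N+1-0))
        = ∑ i ∈ Finset.range (N+1), (-1:ℝ)^i * ((N.choose i : ℕ)) * poch a i * poch (b+(i:ℝ)) (N+1-i) := by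
      rw [Finset.sum_range_succ'
        (fun i => (-1:ℝ)^i * ((N.choose i : ℕ)) * poch a i * poch (b+(i:ℝ)) (N+1-i)) N]
      rw [Finset.sum_range_succ]
      simp [Nat.choose_succ_self, Nat.succ_sub_succ, add_assoc]
    have hcomb : (∑ i ∈ Finset.range (N+1), (-1:ℝ)^i * ((N.choose i : ℕ)) * poch a i * poch (b+(i:ℝ)) (N+1-i))
        + (∑ i ∈ Finset.range (N+1), (-1:ℝ)^(i+1) * ((N.choose i : ℕ)) * poch a (i+1) * poch (b+(i:ℝ)+1) (N-i))
        = (b - a) * ∑ i ∈ Finset.range (N+1), (-1:ℝ)^i * ((N.choose i : ℕ)) * poch a i * poch ((b+1)+(i:ℝ)) (N-i) := by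
      rw [← Finset.sum_add_distrib, Finset.mul_sum]
      apply Finset.sum_congr rfl
      intro i hi
      have hiN : i ≤ N := Nat.lt_succ_iff.mp (Finset.mem_range.mp hi)
      have h1 : N + 1 - i = (N - i) + 1 := by omega
      rw [h1, poch_succ_left, poch_succ]
      have h2 : b + (i:ℝ) + 1 = (b + 1) + (i:ℝ) := by ring
      rw [h2]
      ring
    have hT : (b-a) * ∑ i ∈ Finset.range (N+1), (-1:ℝ)^i * ((N.choose i : ℕ)) * poch a i * poch ((b+1)+(i:ℝ)) (N-i) = poch (b-a) (N+1) := by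
      rw [ih a (b+1)]
      have h3 : b + 1 - a = (b - a) + 1 := by ring
      rw [h3, ← poch_succ_left]
    linarith [hA, hcomb, hT]

lemma factorial_poch (A i : ℕ) : (((A+i).factorial : ℕ) : ℝ) = (A.factorial : ℝ) * poch ((A:ℝ)+1) i := by
  induction i with
  | zero => simp
  | succ i ih =>
    have : A + (i+1) = (A+i) + 1 := by omega
    rw [this, Nat.factorial_succ, poch_succ]
    push_cast
    rw [ih]
    ring

lemma vandermonde_div (N : ℕ) (A B : ℝ) (hB : 0 < B) :
    ∑ i ∈ Finset.range (N+1), (-1:ℝ)^i * (N.choose i) * (poch A i / poch B i)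
      = poch (B-A) N / poch B N := by
  have hBN : poch B N ≠ 0 := ne_of_gt (poch_pos hB N)
  rw [eq_div_iff hBN, Finset.sum_mul, ← vandermonde N A B]
  apply Finset.sum_congr rfl
  intro i hi
  have hiN : i ≤ N := Nat.lt_succ_iff.mp (Finset.mem_range.mp hi)
  have h1 : N = i + (N - i) := by omega
  have h2 : poch B N = poch B i * poch (B+i) (N-i) := by
    nth_rewrite 1 [h1]; exact poch_add B i (N-i)
  rw [h2]
  have hBi : poch B i ≠ 0 := ne_of_gt (poch_pos hB i)
  field_simp

/-- The key hypergeometric (Chu–Vandermonde) evaluation for Jacobi symmetry. -/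
lemma jacobiInnerSum (n j : ℕ) (hj : j ≤ n) (a : ℝ) (ha1 : -1 < a) (ha2 : a < 1) :
    ∑ m ∈ Finset.range (n+1),
      (Real.Gamma (a+(n:ℝ)+1) * (((n+m).factorial : ℕ) : ℝ) /
        ((m.factorial : ℝ) * ((n-m).factorial : ℝ) * (n.factorial : ℝ) * Real.Gamma (a+(m:ℝ)+1)))
        * ((-1:ℝ)^m * ((m.choose j : ℕ) : ℝ))
    = (-1:ℝ)^n * (Real.Gamma (-a+(n:ℝ)+1) * (((n+j).factorial : ℕ) : ℝ) /
        ((j.factorial : ℝ) * ((n-j).factorial : ℝ) * (n.factorial : ℝ) * Real.Gamma (-a+(j:ℝ)+1))) := by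
  classical
  have hB : (0:ℝ) < a + (j:ℝ) + 1 := by
    have : (0:ℝ) ≤ (j:ℝ) := Nat.cast_nonneg j
    linarith
  have hC2 : (0:ℝ) < -a + (j:ℝ) + 1 := by
    have : (0:ℝ) ≤ (j:ℝ) := Nat.cast_nonneg j
    linarith
  have hsub : Finset.Ico j (n+1) ⊆ Finset.range (n+1) := by
    intro m hm
    simp only [Finset.mem_range]
    exact (Finset.mem_Ico.mp hm).2
  rw [← Finset.sum_subset hsub (by
    intro m hm hnot
    have hmj : m < j := by
      simp only [Finset.mem_Ico, Finset.mem_range] at *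
      omega
    rw [Nat.choose_eq_zero_of_lt hmj]
    simp)]
  rw [Finset.sum_Ico_eq_sum_range]
  set M := n - j with hM
  have hMn : j + M = n := by omega
  have hrange : n + 1 - j = M + 1 := by omega
  rw [hrange]
  set A : ℝ := (n:ℝ) + (j:ℝ) + 1 with hA
  set B : ℝ := a + (j:ℝ) + 1 with hBdef
  set C : ℝ := (-1:ℝ)^j * Real.Gamma (a+(n:ℝ)+1) * (((n+j).factorial : ℕ) : ℝ) /
      ((j.factorial : ℝ) * (M.factorial : ℝ) * (n.factorial : ℝ) * Real.Gamma B) with hC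
  have hterm : ∀ i ∈ Finset.range (M+1),
      (Real.Gamma (a+(n:ℝ)+1) * (((n+(j+i)).factorial : ℕ) : ℝ) /
        (((j+i).factorial : ℝ) * ((n-(j+i)).factorial : ℝ) * (n.factorial : ℝ) * Real.Gamma (a+((j+i:ℕ):ℝ)+1)))
        * ((-1:ℝ)^(j+i) * (((j+i).choose j : ℕ) : ℝ))
      = C * ((-1:ℝ)^i * ((M.choose i : ℕ) : ℝ) * (poch A i / poch B i)) := by
    intro i hi
    have hiM : i ≤ M := Nat.lt_succ_iff.mp (Finset.mem_range.mp hi)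
    have e1 : n + (j+i) = (n+j) + i := by omega
    have e2 : n - (j+i) = M - i := by omega
    rw [e1, e2]
    have f1 : ((((n+j)+i).factorial : ℕ) : ℝ) = (((n+j).factorial : ℕ) : ℝ) * poch A i := by
      have := factorial_poch (n+j) i
      rw [this]
      congr 2
      push_cast [hA]
      ring
    have f2 : Real.Gamma (a+((j+i:ℕ):ℝ)+1) = Real.Gamma B * poch B i := by
      have harg : a+((j+i:ℕ):ℝ)+1 = B + (i:ℝ) := by push_cast [hBdef]; ring
      rw [harg, Gamma_poch hB]
    have f3 : (((j+i).choose j : ℕ) : ℝ) = (((j+i).factorial : ℕ) : ℝ) / ((j.factorial : ℝ) * (i.factorial : ℝ)) := by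
      rw [eq_div_iff (by positivity)]
      have h := Nat.choose_mul_factorial_mul_factorial (Nat.le_add_right j i) (n := j + i)
      have h2 : j + i - j = i := by omega
      rw [h2] at h
      push_cast [← h]
      ring
    have f4 : ((M.choose i : ℕ) : ℝ) = ((M.factorial : ℕ) : ℝ) / ((i.factorial : ℝ) * ((M-i).factorial : ℝ)) := by
      rw [eq_div_iff (by positivity)]
      have h := Nat.choose_mul_factorial_mul_factorial hiM (n := M)
      push_cast [← h]
      ring
    rw [f1, f2, f3, f4, hC]
    have hg1 : Real.Gamma B ≠ 0 := ne_of_gt (Real.Gamma_pos_of_pos hB)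
    have hp1 : poch B i ≠ 0 := ne_of_gt (poch_pos hB i)
    have hpow : ((-1:ℝ))^(j+i) = (-1)^j * (-1)^i := pow_add _ _ _
    rw [hpow]
    field_simp
  rw [Finset.sum_congr rfl hterm, ← Finset.mul_sum, vandermonde_div M A B hB]
  have hcast : ((M:ℕ) : ℝ) = (n:ℝ) - (j:ℝ) := by
    rw [hM]
    push_cast [Nat.cast_sub hj]
    ring
  have g1 : poch B M = Real.Gamma (a+(n:ℝ)+1) / Real.Gamma B := by
    rw [eq_div_iff (ne_of_gt (Real.Gamma_pos_of_pos hB))]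
    rw [mul_comm, ← Gamma_poch hB M]
    congr 1
    rw [hcast, hBdef]
    ring
  have g2 : poch (B - A) M = (-1:ℝ)^M * (Real.Gamma (-a+(n:ℝ)+1) / Real.Gamma (-a+(j:ℝ)+1)) := by
    have hrefl := poch_reflect (B - A) M
    have harg : -(B-A) - (M:ℝ) + 1 = -a + (j:ℝ) + 1 := by
      rw [hcast, hBdef, hA]; ring
    rw [hrefl, harg]
    congr 1
    rw [eq_div_iff (ne_of_gt (Real.Gamma_pos_of_pos hC2))]
    rw [mul_comm, ← Gamma_poch hC2 M]
    congr 1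
    rw [hcast]
    ring
  rw [g1, g2, hC]
  have hpow2 : ((-1:ℝ))^j * (-1:ℝ)^M = (-1:ℝ)^n := by
    rw [← pow_add, hMn]
  have hg1 : Real.Gamma B ≠ 0 := ne_of_gt (Real.Gamma_pos_of_pos hB)
  have hg2 : Real.Gamma (-a+(j:ℝ)+1) ≠ 0 := ne_of_gt (Real.Gamma_pos_of_pos hC2)
  have hg3 : Real.Gamma (a+(n:ℝ)+1) ≠ 0 := by
    apply ne_of_gt; apply Real.Gamma_pos_of_pos
    have : (0:ℝ) ≤ (n:ℝ) := Nat.cast_nonneg n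
    linarith
  have hMfac : (n - j).factorial = M.factorial := by rw [hM]
  rw [hMfac, ← hpow2]
  field_simp


lemma jacobi_symm (n : ℕ) (a : ℝ) (ha1 : -1 < a) (ha2 : a < 1) (x : ℝ) :
    jacobiP n a (-a) x = (-1:ℝ)^n * jacobiP n (-a) a (-x) := by
  rw [jacobiP, jacobiP, Finset.mul_sum]
  set t : ℝ := (x+1)/2 with ht
  have LHSstep : ∀ m ∈ Finset.range (n+1),
      (Real.Gamma (a + (n:ℝ) + 1) * Real.Gamma (a + -a + (n:ℝ) + (m:ℝ) + 1)) /
        ((m.factorial : ℝ) * ((n - m).factorial : ℝ) * Real.Gamma (a + -a + (n:ℝ) + 1) *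
          Real.Gamma (a + (m:ℝ) + 1)) * ((x - 1) / 2) ^ m
      = ∑ j ∈ Finset.range (n+1),
          (Real.Gamma (a+(n:ℝ)+1) * (((n+m).factorial : ℕ) : ℝ) /
            ((m.factorial : ℝ) * ((n-m).factorial : ℝ) * (n.factorial : ℝ) * Real.Gamma (a+(m:ℝ)+1)))
            * ((-1:ℝ)^m * ((m.choose j : ℕ) : ℝ)) * ((-1:ℝ)^j * t^j) := by
    intro m hm
    have hmn : m ≤ n := Nat.lt_succ_iff.mp (Finset.mem_range.mp hm)
    have hG1 : Real.Gamma (a + -a + (n:ℝ) + (m:ℝ) + 1) = (((n+m).factorial : ℕ) : ℝ) := by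
      have h : a + -a + (n:ℝ) + (m:ℝ) + 1 = ((n+m : ℕ):ℝ) + 1 := by push_cast; ring
      rw [h, Real.Gamma_nat_eq_factorial]
    have hG2 : Real.Gamma (a + -a + (n:ℝ) + 1) = ((n.factorial : ℕ) : ℝ) := by
      have h : a + -a + (n:ℝ) + 1 = ((n : ℕ):ℝ) + 1 := by push_cast; ring
      rw [h, Real.Gamma_nat_eq_factorial]
    have hpow : ((x-1)/2)^m
        = (-1:ℝ)^m * ∑ j ∈ Finset.range (n+1), (-1:ℝ)^j * t^j * ((m.choose j : ℕ) : ℝ) := by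
      have h1 : (x-1)/2 = (-1) * (-t + 1) := by rw [ht]; ring
      rw [h1, mul_pow, add_pow]
      congr 1
      rw [Finset.sum_subset (Finset.range_subset_range.mpr (by omega : m+1 ≤ n+1))
        (by
          intro j hj1 hj2
          have : m < j := by
            simp only [Finset.mem_range] at hj1 hj2
            omega
          rw [Nat.choose_eq_zero_of_lt this]
          simp)]
      apply Finset.sum_congr rfl
      intro j _
      rw [neg_pow t j, one_pow]
      ring
    rw [hG1, hG2, hpow, Finset.mul_sum, Finset.mul_sum]
    apply Finset.sum_congr rfl
    intro j _
    ring
  rw [Finset.sum_congr rfl LHSstep, Finset.sum_comm]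
  apply Finset.sum_congr rfl
  intro j hj
  have hjn : j ≤ n := Nat.lt_succ_iff.mp (Finset.mem_range.mp hj)
  rw [← Finset.sum_mul, jacobiInnerSum n j hjn a ha1 ha2]
  have hG1 : Real.Gamma (-a + a + (n:ℝ) + (j:ℝ) + 1) = (((n+j).factorial : ℕ) : ℝ) := by
    have h : -a + a + (n:ℝ) + (j:ℝ) + 1 = ((n+j : ℕ):ℝ) + 1 := by push_cast; ring
    rw [h, Real.Gamma_nat_eq_factorial]
  have hG2 : Real.Gamma (-a + a + (n:ℝ) + 1) = ((n.factorial : ℕ) : ℝ) := by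
    have h : -a + a + (n:ℝ) + 1 = ((n : ℕ):ℝ) + 1 := by push_cast; ring
    rw [h, Real.Gamma_nat_eq_factorial]
  rw [hG1, hG2]
  have hxx : (-x - 1)/2 = -t := by rw [ht]; ring
  rw [hxx, neg_pow t j]
  ring


lemma hasDerivAt_one_sub_rpow (p : ℝ) {y : ℝ} (hy : y < 1) :
    HasDerivAt (fun t : ℝ => (1-t) ^ p) (-(p * (1-y)^(p-1))) y := by
  have h1 : HasDerivAt (fun t : ℝ => 1 - t) (-1) y := (hasDerivAt_id y).const_sub 1
  have h2 : HasDerivAt (fun s : ℝ => s ^ p) (p * (1-y)^(p-1)) (1-y) :=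
    Real.hasDerivAt_rpow_const (Or.inl (by linarith : (1:ℝ)-y ≠ 0))
  have := h2.comp y h1
  simpa [Function.comp_def, mul_comm] using this

lemma hasDerivAt_sub_rpow (c p : ℝ) {y : ℝ} (hy : c < y) :
    HasDerivAt (fun t : ℝ => (t-c) ^ p) (p * (y-c)^(p-1)) y := by
  have h1 : HasDerivAt (fun t : ℝ => t - c) (1) y := (hasDerivAt_id y).sub_const c
  have h2 : HasDerivAt (fun s : ℝ => s ^ p) (p * (y-c)^(p-1)) (y-c) :=
    Real.hasDerivAt_rpow_const (Or.inl (by linarith : y - c ≠ 0))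
  have := h2.comp y h1
  simpa [Function.comp_def] using this

lemma continuous_sub_rpow (c p : ℝ) (hp : 0 < p) : Continuous (fun y : ℝ => (y - c)^p) := by
  apply continuous_iff_continuousAt.mpr
  intro y
  exact (Real.continuousAt_rpow_const _ _ (Or.inr hp.le)).comp (by fun_prop)

lemma integrable_kernel (σ : ℝ) (hσ : 0 < σ) (x : ℝ) (g : ℝ → ℝ) (hg : Continuous g) :
    IntervalIntegrable (fun y => (y - x)^(σ-1) * g y) volume x 1 := by
  have h1 : IntervalIntegrable (fun y : ℝ => (y - x)^(σ-1)) volume x 1 := by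
    have h0 := intervalIntegral.intervalIntegrable_rpow' (a := 0) (b := 1 - x)
      (r := σ-1) (by linarith)
    have h2 := h0.comp_sub_right x
    simpa using h2
  exact h1.mul_continuousOn hg.continuousOn

lemma J_eval (m : ℕ) : ∀ (σ : ℝ), 0 < σ → ∀ (x : ℝ), x ≤ 1 →
    (∫ y in x..(1:ℝ), (y - x)^(σ-1) * (1-y)^m)
      = ((m.factorial : ℝ) * Real.Gamma σ / Real.Gamma (σ + m + 1)) * (1-x)^(σ+m) := by
  induction m with
  | zero =>
    intro σ hσ x hx
    have hσ0 : σ ≠ 0 := ne_of_gt hσ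
    have hFTC := intervalIntegral.integral_eq_sub_of_hasDerivAt_of_le hx
      (f := fun y => (y-x)^σ / σ) (f' := fun y => (y-x)^(σ-1))
      (by
        apply ContinuousOn.div_const
        exact ((continuous_sub_rpow x σ hσ).continuousOn))
      (by
        intro y hy
        have := (hasDerivAt_sub_rpow x σ hy.1).div_const σ
        convert this using 1
        · rfl
        field_simp)
      (by simpa using integrable_kernel σ hσ x (fun _ => 1) continuous_const)
    simp only [pow_zero, mul_one] at *
    rw [hFTC, sub_self, Real.zero_rpow hσ0]
    simp only [Nat.cast_zero, add_zero, Nat.factorial_zero, Nat.cast_one, one_mul]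
    rw [Real.Gamma_add_one hσ0]
    have hΓσ : Real.Gamma σ ≠ 0 := ne_of_gt (Real.Gamma_pos_of_pos hσ)
    field_simp
    ring
  | succ m ih =>
    intro σ hσ x hx
    have hσ0 : σ ≠ 0 := ne_of_gt hσ
    have hcont : Continuous (fun y : ℝ => (y-x)^σ * (1-y)^(m+1) / σ) := by
      apply Continuous.div_const
      exact (continuous_sub_rpow x σ hσ).mul (by fun_prop)
    have hint1 : IntervalIntegrable (fun y => (y - x)^(σ-1) * (1-y)^(m+1)) volume x 1 :=
      integrable_kernel σ hσ x _ (by fun_prop)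
    have hint2 : IntervalIntegrable (fun y => ((m:ℝ)+1)/σ * ((y - x)^σ * (1-y)^m)) volume x 1 := by
      apply Continuous.intervalIntegrable
      exact continuous_const.mul ((continuous_sub_rpow x σ hσ).mul (by fun_prop))
    have hFTC := intervalIntegral.integral_eq_sub_of_hasDerivAt_of_le hx
      (f := fun y => (y-x)^σ * (1-y)^(m+1) / σ)
      (f' := fun y => (y - x)^(σ-1) * (1-y)^(m+1) - ((m:ℝ)+1)/σ * ((y - x)^σ * (1-y)^m))
      hcont.continuousOn
      (by
        intro y hy
        have hd1 : HasDerivAt (fun t : ℝ => (t-x)^σ) (σ * (y-x)^(σ-1)) y :=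
          hasDerivAt_sub_rpow x σ hy.1
        have hd2 : HasDerivAt (fun t : ℝ => (1-t)^(m+1)) (-(((m:ℝ)+1) * (1-y)^m)) y := by
          have h1 : HasDerivAt (fun t : ℝ => 1 - t) (-1) y := (hasDerivAt_id y).const_sub 1
          have := h1.fun_pow (m+1)
          simpa [mul_comm] using this
        have := (hd1.fun_mul hd2).div_const σ
        convert this using 1
        · rfl
        have hyx : (0:ℝ) < y - x := by linarith [hy.1]
        have hrw : (y-x)^σ = (y-x)^(σ-1) * (y-x) := by
          rw [← Real.rpow_add_one (by linarith : y - x ≠ 0) (σ-1)]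
          ring_nf
        field_simp
        ring)
      (hint1.sub hint2)
    have hF1 : (1-x)^σ * (1-(1:ℝ))^(m+1) / σ = 0 := by simp
    have hFx : (x-x)^σ * (1-x)^(m+1) / σ = 0 := by
      rw [sub_self, Real.zero_rpow hσ0]; ring
    rw [intervalIntegral.integral_sub hint1 hint2] at hFTC
    rw [intervalIntegral.integral_const_mul] at hFTC
    have hih := ih (σ+1) (by linarith) x hx
    have hI2 : (∫ y in x..(1:ℝ), (y - x)^σ * (1-y)^m)
        = ((m.factorial : ℝ) * Real.Gamma (σ+1) / Real.Gamma (σ + 1 + m + 1)) * (1-x)^(σ+1+m) := by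
      rw [← hih]
      apply intervalIntegral.integral_congr
      intro y _
      norm_num
    rw [hI2, hF1, hFx, sub_self] at hFTC
    have hgoal : (∫ y in x..(1:ℝ), (y - x)^(σ-1) * (1-y)^(m+1)) =
        ((m:ℝ)+1)/σ * (((m.factorial : ℝ) * Real.Gamma (σ+1) / Real.Gamma (σ + 1 + m + 1)) * (1-x)^(σ+1+m)) := by
      linarith [hFTC]
    rw [hgoal]
    rw [Real.Gamma_add_one hσ0]
    rw [show σ + 1 + (m:ℝ) + 1 = σ + ((m+1:ℕ):ℝ) + 1 by push_cast; ring]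
    rw [show σ + 1 + (m:ℝ) = σ + ((m+1:ℕ):ℝ) by push_cast; ring]
    rw [Nat.factorial_succ]
    have hΓ2 : Real.Gamma (σ + ((m+1:ℕ):ℝ) + 1) ≠ 0 := by
      apply ne_of_gt; apply Real.Gamma_pos_of_pos
      have : (0:ℝ) ≤ ((m+1:ℕ):ℝ) := Nat.cast_nonneg _
      linarith
    push_cast
    field_simp



def cJ (n m : ℕ) : ℝ :=
  (-1:ℝ)^m * (((n+m).factorial : ℕ) : ℝ) /
    ((m.factorial : ℝ) * (m.factorial : ℝ) * ((n-m).factorial : ℝ) * 2^m)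

lemma legendre_expand (n : ℕ) (y : ℝ) :
    jacobiP n 0 0 y = ∑ m ∈ Finset.range (n+1), cJ n m * (1-y)^m := by
  rw [jacobiP]
  apply Finset.sum_congr rfl
  intro m hm
  have hG1 : Real.Gamma ((0:ℝ) + (n:ℝ) + 1) = ((n.factorial : ℕ) : ℝ) := by
    rw [show (0:ℝ) + (n:ℝ) + 1 = (n:ℝ) + 1 by ring, Real.Gamma_nat_eq_factorial]
  have hG2 : Real.Gamma ((0:ℝ) + 0 + (n:ℝ) + (m:ℝ) + 1) = (((n+m).factorial : ℕ) : ℝ) := by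
    rw [show (0:ℝ) + 0 + (n:ℝ) + (m:ℝ) + 1 = ((n+m:ℕ):ℝ) + 1 by push_cast; ring,
      Real.Gamma_nat_eq_factorial]
  have hG3 : Real.Gamma ((0:ℝ) + 0 + (n:ℝ) + 1) = ((n.factorial : ℕ) : ℝ) := by
    rw [show (0:ℝ) + 0 + (n:ℝ) + 1 = (n:ℝ) + 1 by ring, Real.Gamma_nat_eq_factorial]
  have hG4 : Real.Gamma ((0:ℝ) + (m:ℝ) + 1) = ((m.factorial : ℕ) : ℝ) := by
    rw [show (0:ℝ) + (m:ℝ) + 1 = (m:ℝ) + 1 by ring, Real.Gamma_nat_eq_factorial]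
  rw [hG1, hG2, hG3, hG4, cJ]
  have hpow : ((y - 1)/2)^m = (-1:ℝ)^m * (1-y)^m / 2^m := by
    rw [show (y-1)/2 = (-1) * ((1-y)/2) by ring, mul_pow, div_pow]
    ring
  rw [hpow]
  have h1 : ((m.factorial : ℕ) : ℝ) ≠ 0 := by positivity
  have h2 : (((n-m).factorial : ℕ) : ℝ) ≠ 0 := by positivity
  have h3 : ((n.factorial : ℕ) : ℝ) ≠ 0 := by positivity
  field_simp

lemma Ir_hasDerivAt (α : ℝ) (hα1 : 1 < α) (hα2 : α < 2) (n : ℕ) {x : ℝ}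
    (hx1 : -1 < x) (hx2 : x < 1) :
    HasDerivAt (Ir (2-α) (fun y => jacobiP n 0 0 y))
      (-((Real.Gamma ((n:ℝ)+1) / Real.Gamma ((n:ℝ)+2-α)) * (1-x)^(1-α) *
        jacobiP n (1-α) (α-1) x)) x := by
  set σ : ℝ := 2 - α with hσdef
  have hσ : 0 < σ := by rw [hσdef]; linarith
  have hσ0 : σ ≠ 0 := ne_of_gt hσ
  have hΓσ : Real.Gamma σ ≠ 0 := ne_of_gt (Real.Gamma_pos_of_pos hσ)
  set R : ℝ → ℝ := fun z => (1/Real.Gamma σ) * ∑ m ∈ Finset.range (n+1),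
      cJ n m * (((m.factorial : ℝ) * Real.Gamma σ / Real.Gamma (σ + m + 1)) * (1-z)^(σ+m)) with hR
  have hIr : ∀ z ∈ Set.Iio (1:ℝ), Ir σ (fun y => jacobiP n 0 0 y) z = R z := by
    intro z hz
    rw [Ir, if_neg hσ0, hR]
    congr 1
    have hInt : ∀ m ∈ Finset.range (n+1),
        IntervalIntegrable (fun y => cJ n m * ((y - z)^(σ-1) * (1-y)^m)) volume z 1 :=
      fun m _ => (integrable_kernel σ hσ z _ (by fun_prop)).const_mul _
    rw [intervalIntegral.integral_congr
      (g := fun y => ∑ m ∈ Finset.range (n+1), cJ n m * ((y - z)^(σ-1) * (1-y)^m))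
      (by
        intro y _
        simp only
        rw [legendre_expand n y, Finset.mul_sum]
        apply Finset.sum_congr rfl
        intro m _
        ring)]
    rw [intervalIntegral.integral_finset_sum hInt]
    apply Finset.sum_congr rfl
    intro m _
    rw [intervalIntegral.integral_const_mul, J_eval m σ hσ z (le_of_lt (Set.mem_Iio.mp hz))]
  have hRd : HasDerivAt R ((1/Real.Gamma σ) * ∑ m ∈ Finset.range (n+1),
      cJ n m * (((m.factorial : ℝ) * Real.Gamma σ / Real.Gamma (σ + m + 1)) *
        (-((σ+m) * (1-x)^(σ+m-1))))) x := by
    apply HasDerivAt.const_mul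
    apply HasDerivAt.fun_sum
    intro m _
    exact ((hasDerivAt_one_sub_rpow (σ+(m:ℝ)) hx2).const_mul _).const_mul _
  have hEq : (Ir σ (fun y => jacobiP n 0 0 y)) =ᶠ[nhds x] R :=
    Filter.eventuallyEq_of_mem (Iio_mem_nhds hx2) hIr
  have hD := hRd.congr_of_eventuallyEq hEq
  convert hD using 1
  · rfl
  · rfl
  rw [jacobiP, Finset.mul_sum, Finset.mul_sum, ← Finset.sum_neg_distrib]
  apply Finset.sum_congr rfl
  intro m _
  have hσm : (0:ℝ) < σ + m := by
    have : (0:ℝ) ≤ (m:ℝ) := Nat.cast_nonneg m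
    linarith
  have hA1 : Real.Gamma ((n:ℝ)+1) = ((n.factorial : ℕ) : ℝ) := Real.Gamma_nat_eq_factorial n
  have hA2 : Real.Gamma (1-α+(n:ℝ)+1) = Real.Gamma ((n:ℝ)+2-α) := by
    congr 1; ring
  have hA3 : Real.Gamma (1-α+(α-1)+(n:ℝ)+(m:ℝ)+1) = (((n+m).factorial : ℕ) : ℝ) := by
    rw [show 1-α+(α-1)+(n:ℝ)+(m:ℝ)+1 = ((n+m:ℕ):ℝ)+1 by push_cast; ring,
      Real.Gamma_nat_eq_factorial]
  have hA4 : Real.Gamma (1-α+(α-1)+(n:ℝ)+1) = ((n.factorial : ℕ) : ℝ) := by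
    rw [show 1-α+(α-1)+(n:ℝ)+1 = (n:ℝ)+1 by ring, Real.Gamma_nat_eq_factorial]
  have hA5 : Real.Gamma (1-α+(m:ℝ)+1) = Real.Gamma (σ+(m:ℝ)) := by
    congr 1; rw [hσdef]; ring
  have hA6 : Real.Gamma (σ+(m:ℝ)+1) = (σ+(m:ℝ)) * Real.Gamma (σ+(m:ℝ)) := by
    rw [show σ+(m:ℝ)+1 = (σ+(m:ℝ))+1 by ring, Real.Gamma_add_one (ne_of_gt hσm)]
  have hA7 : ((x-1)/2)^m = (-1:ℝ)^m * (1-x)^m / 2^m := by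
    rw [show (x-1)/2 = (-1) * ((1-x)/2) by ring, mul_pow, div_pow]; ring
  have hA8 : (1-x)^(σ+(m:ℝ)-1) = (1-x)^(1-α) * (1-x)^m := by
    rw [show σ+(m:ℝ)-1 = (1-α)+(m:ℝ) by rw [hσdef]; ring,
      Real.rpow_add (by linarith : (0:ℝ) < 1-x), Real.rpow_natCast]
  rw [hA1, hA2, hA3, hA4, hA5, hA6, hA7, hA8, cJ]
  have hn1 : Real.Gamma ((n:ℝ)+2-α) ≠ 0 := by
    apply ne_of_gt; apply Real.Gamma_pos_of_pos
    have : (0:ℝ) ≤ (n:ℝ) := Nat.cast_nonneg n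
    linarith
  have hn2 : Real.Gamma (σ+(m:ℝ)) ≠ 0 := ne_of_gt (Real.Gamma_pos_of_pos hσm)
  have hf1 : ((m.factorial : ℕ) : ℝ) ≠ 0 := by positivity
  have hf2 : (((n-m).factorial : ℕ) : ℝ) ≠ 0 := by positivity
  have hf3 : ((n.factorial : ℕ) : ℝ) ≠ 0 := by positivity
  have hf4 : ((2:ℝ))^m ≠ 0 := by positivity
  field_simp

set_option maxHeartbeats 1000000 in
theorem statement14 (α : ℝ) (hα1 : 1 < α) (hα2 : α < 2)
    (n : ℕ) (x : ℝ) (hx : x ∈ Set.Ioo (-1 : ℝ) 1) :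
    deriv (Il (2 - α) (fun y => jacobiP n 0 0 y)) x =
      (Real.Gamma (n + 1) / Real.Gamma (n + 2 - α)) * (1 + x) ^ (1 - α) *
        jacobiP n (α - 1) (1 - α) x ∧
    -deriv (Ir (2 - α) (fun y => jacobiP n 0 0 y)) x =
      (Real.Gamma (n + 1) / Real.Gamma (n + 2 - α)) * (1 - x) ^ (1 - α) *
        jacobiP n (1 - α) (α - 1) x := by
  obtain ⟨hx1, hx2⟩ := hx
  have hσ : (0:ℝ) < 2 - α := by linarith
  have hσ0 : (2:ℝ) - α ≠ 0 := ne_of_gt hσ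
  have hsymmL : ∀ t : ℝ, jacobiP n 0 0 (-t) = (-1:ℝ)^n * jacobiP n 0 0 t := by
    intro t
    have h := jacobi_symm n 0 (by norm_num) (by norm_num) (-t)
    simp only [neg_zero, neg_neg] at h
    exact h
  have hder := Ir_hasDerivAt α hα1 hα2 n hx1 hx2
  constructor
  · -- left case via reflection
    have hIl : ∀ z : ℝ, Il (2-α) (fun y => jacobiP n 0 0 y) z
        = (-1:ℝ)^n * Ir (2-α) (fun y => jacobiP n 0 0 y) (-z) := by
      intro z
      rw [Il, Ir, if_neg hσ0, if_neg hσ0]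
      have hsub := intervalIntegral.integral_comp_neg (a := (-1:ℝ)) (b := z)
        (f := fun y => (y - -z)^((2-α)-1) * jacobiP n 0 0 (-y))
      rw [neg_neg] at hsub
      have hcongr1 : (∫ y in (-1:ℝ)..z, (z - y)^((2-α)-1) * jacobiP n 0 0 y)
          = ∫ y in (-1:ℝ)..z, ((-y) - -z)^((2-α)-1) * jacobiP n 0 0 (-(-y)) := by
        apply intervalIntegral.integral_congr
        intro y _
        simp only [neg_neg]
        congr 2
        ring
      rw [hcongr1, hsub]
      have hcongr2 : (∫ y in (-z:ℝ)..(1:ℝ), (y - -z)^((2-α)-1) * jacobiP n 0 0 (-y))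
          = ∫ y in (-z:ℝ)..(1:ℝ), (-1:ℝ)^n * ((y - -z)^((2-α)-1) * jacobiP n 0 0 y) := by
        apply intervalIntegral.integral_congr
        intro y _
        simp only
        rw [hsymmL y]
        ring
      rw [hcongr2, intervalIntegral.integral_const_mul]
      ring
    have h1 := Ir_hasDerivAt α hα1 hα2 n (x := -x) (by linarith) (by linarith)
    have h2 : HasDerivAt (fun z : ℝ => -z) (-1) x := (hasDerivAt_id x).neg
    have h3 := (h1.comp x h2).const_mul ((-1:ℝ)^n)
    have h4 : HasDerivAt (Il (2-α) (fun y => jacobiP n 0 0 y))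
        ((-1:ℝ)^n * (-((Real.Gamma ((n:ℝ)+1) / Real.Gamma ((n:ℝ)+2-α)) * (1 - -x)^(1-α) *
          jacobiP n (1-α) (α-1) (-x)) * -1)) x := by
      rw [show Il (2-α) (fun y => jacobiP n 0 0 y)
          = (fun z => (-1:ℝ)^n * (Ir (2-α) (fun y => jacobiP n 0 0 y) (-z))) from funext hIl]
      exact h3
    rw [h4.deriv]
    have hb : (1:ℝ) - -x = 1 + x := by ring
    rw [hb]
    have hs := jacobi_symm n (1-α) (by linarith) (by linarith) (-x)
    rw [show -(1-α) = α - 1 by ring, neg_neg] at hs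
    rw [hs]
    have hpow : (-1:ℝ)^n * (-1:ℝ)^n = 1 := by
      rw [← mul_pow]
      norm_num
    linear_combination (Real.Gamma ((n:ℝ)+1) / Real.Gamma ((n:ℝ)+2-α)) * (1+x)^(1-α) *
      jacobiP n (α-1) (1-α) x * hpow
  · rw [hder.deriv]
    ring
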